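/- Let M be the block matrix ((id_n, 0), (A, −b)) of size (n+r) × (n+1), where A ∈ ℤ^{r×n} and b ∈ ℤ^r, and suppose the top-left k × k block A_1 of A is nonsingular. Then performing successive column eliminations with pivots at positions (n+1,1), (n+2,2), …, (n+k,k) (in any order of the pivot pairs) yields, after removing the ignored rows n+1,…,n+k and columns 1,…,k, the matrix with blocks: top block (−A_1^{-1}A_2, A_1^{-1}b_1), middle block (id_{n−k}, 0), bottom block (A_4 − A_3 A_1^{-1} A_2, A_3 A_1^{-1} b_1 − b_2). In particular the result is independent of the order in which the pivots are processed. -/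

import Mathlib

open Matrix

/-- Row index type of `M`: rows `1..n` split as `Fin k ⊕ Fin m` (with `m = n - k`),
and rows `n+1..n+r` split as `Fin k ⊕ Fin s` (with `s = r - k`). -/
abbrev RowIdx (k m s : ℕ) := (Fin k ⊕ Fin m) ⊕ (Fin k ⊕ Fin s)

/-- Column index type of `M`: columns `1..n` split as `Fin k ⊕ Fin m`, plus the last column. -/
abbrev ColIdx (k m : ℕ) := (Fin k ⊕ Fin m) ⊕ Unit

/-- Gaussian column elimination with the `(i,j)` entry as pivot: add
`-(M i s / M i j)` times column `j` to each column `s ≠ j`. -/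
def colElim {R C : Type*} [DecidableEq C] (M : Matrix R C ℚ) (i : R) (j : C) :
    Matrix R C ℚ :=
  fun a s => if s = j then M a s else M a s - M i s / M i j * M a j

/-- Perform the pivot eliminations at positions `(n+i, i)` for `i` in the list `L`. -/
def elimAll {k m s : ℕ} (M : Matrix (RowIdx k m s) (ColIdx k m) ℚ) (L : List (Fin k)) :
    Matrix (RowIdx k m s) (ColIdx k m) ℚ :=
  L.foldl (fun N i => colElim N (Sum.inr (Sum.inl i)) (Sum.inl (Sum.inl i))) M

/-- The matrix `M = ((id_n, 0), (A, -b))` in block form, where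
`A = ((A₁,A₂),(A₃,A₄))` and `b = (b₁,b₂)`. -/
def bigM {k m s : ℕ} (A₁ : Matrix (Fin k) (Fin k) ℚ) (A₂ : Matrix (Fin k) (Fin m) ℚ)
    (A₃ : Matrix (Fin s) (Fin k) ℚ) (A₄ : Matrix (Fin s) (Fin m) ℚ)
    (b₁ : Fin k → ℚ) (b₂ : Fin s → ℚ) : Matrix (RowIdx k m s) (ColIdx k m) ℚ :=
  fun p q =>
    match p, q with
    | Sum.inl p', Sum.inl q' => if p' = q' then 1 else 0
    | Sum.inl _, Sum.inr _ => 0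
    | Sum.inr (Sum.inl i), Sum.inl (Sum.inl j) => A₁ i j
    | Sum.inr (Sum.inl i), Sum.inl (Sum.inr j) => A₂ i j
    | Sum.inr (Sum.inl i), Sum.inr _ => -b₁ i
    | Sum.inr (Sum.inr i), Sum.inl (Sum.inl j) => A₃ i j
    | Sum.inr (Sum.inr i), Sum.inl (Sum.inr j) => A₄ i j
    | Sum.inr (Sum.inr i), Sum.inr _ => -b₂ i


section Aux
variable {k m s : ℕ}

lemma colElim_eq_mul (M : Matrix (RowIdx k m s) (ColIdx k m) ℚ) (i0 : RowIdx k m s)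
    (j : ColIdx k m) :
    colElim M i0 j = M * (Matrix.of fun r t => (if r = t then (1:ℚ) else 0) +
      (if r = j ∧ t ≠ j then -(M i0 t / M i0 j) else 0)) := by
  ext a t
  simp only [colElim, Matrix.mul_apply, Matrix.of_apply, mul_add]
  rw [Finset.sum_add_distrib]
  by_cases h : t = j
  · subst h
    simp [mul_ite, Finset.sum_ite_eq']
  · simp only [h, if_neg]
    simp [mul_ite, Finset.sum_ite_eq', h, sub_eq_add_neg, mul_comm]

lemma colElim_row_unchanged {R C : Type*} [DecidableEq C] (M : Matrix R C ℚ) (i0 : R) (j : C)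
    (a : R) (ha : M a j = 0) : ∀ q, colElim M i0 j a q = M a q := by
  intro q
  by_cases h : q = j <;> simp [colElim, h, ha]

lemma colElim_pivot_row {R C : Type*} [DecidableEq C] (M : Matrix R C ℚ) (i0 : R) (j : C)
    (h : M i0 j ≠ 0) : ∀ q ≠ j, colElim M i0 j i0 q = 0 := by
  intro q hq
  simp [colElim, hq, div_mul_cancel₀ _ h]

lemma elimAll_row_preserved (L : List (Fin k)) (a : Fin k) :
    ∀ (M : Matrix (RowIdx k m s) (ColIdx k m) ℚ),
    (∀ q, q ≠ Sum.inl (Sum.inl a) → M (Sum.inr (Sum.inl a)) q = 0) → a ∉ L →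
    ∀ q, q ≠ Sum.inl (Sum.inl a) → elimAll M L (Sum.inr (Sum.inl a)) q = 0 := by
  induction L with
  | nil => intro M hM _ q hq; exact hM q hq
  | cons i L ih =>
    intro M hM haL q hq
    have hia : i ≠ a := fun h => haL (h ▸ (List.mem_cons_self : i ∈ i :: L))
    have hz : M (Sum.inr (Sum.inl a)) (Sum.inl (Sum.inl i)) = 0 := by
      apply hM
      simpa using hia
    show elimAll (colElim M (Sum.inr (Sum.inl i)) (Sum.inl (Sum.inl i))) L _ _ = 0
    refine ih _ ?_ (fun h => haL (List.mem_cons_of_mem _ h)) q hq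
    intro q' hq'
    rw [colElim_row_unchanged _ _ _ _ hz]
    exact hM q' hq'

lemma elimAll_zero_rows (L : List (Fin k)) :
    ∀ (M : Matrix (RowIdx k m s) (ColIdx k m) ℚ), L.Nodup →
    (∀ (L₁ L₂ : List (Fin k)) (i : Fin k), L = L₁ ++ i :: L₂ →
      elimAll M L₁ (Sum.inr (Sum.inl i)) (Sum.inl (Sum.inl i)) ≠ 0) →
    ∀ i ∈ L, ∀ q, q ≠ Sum.inl (Sum.inl i) → elimAll M L (Sum.inr (Sum.inl i)) q = 0 := by
  induction L with
  | nil => intro M _ _ i hi; exact absurd hi List.not_mem_nil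
  | cons a L ih =>
    intro M hnd hpiv i hi q hq
    have hM' : elimAll M (a :: L) = elimAll (colElim M (Sum.inr (Sum.inl a)) (Sum.inl (Sum.inl a))) L := rfl
    rw [hM']
    rcases List.mem_cons.mp hi with h | hiL
    · -- i = a : pivot row becomes zero, then preserved
      subst h
      have hpa : M (Sum.inr (Sum.inl i)) (Sum.inl (Sum.inl i)) ≠ 0 := by
        have := hpiv [] L i rfl
        simpa [elimAll] using this
      refine elimAll_row_preserved L i _ ?_ (List.nodup_cons.mp hnd).1 q hq
      intro q' hq'
      exact colElim_pivot_row M _ _ hpa q' hq'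
    · refine ih _ (List.nodup_cons.mp hnd).2 ?_ i hiL q hq
      intro L₁ L₂ i' hL'
      have := hpiv (a :: L₁) L₂ i' (by simp [hL'])
      simpa [elimAll] using this

lemma elimAll_exists_E (L : List (Fin k)) :
    ∀ (M : Matrix (RowIdx k m s) (ColIdx k m) ℚ),
    ∃ E : Matrix (ColIdx k m) (ColIdx k m) ℚ, elimAll M L = M * E ∧
      ∀ p q, (∀ i : Fin k, p ≠ Sum.inl (Sum.inl i)) → E p q = if p = q then 1 else 0 := by
  induction L with
  | nil =>
    intro M
    exact ⟨1, (Matrix.mul_one M).symm, fun p q _ => Matrix.one_apply⟩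
  | cons a L ih =>
    intro M
    set j : ColIdx k m := Sum.inl (Sum.inl a) with hj
    set i0 : RowIdx k m s := Sum.inr (Sum.inl a) with hi0
    set E₀ : Matrix (ColIdx k m) (ColIdx k m) ℚ := Matrix.of fun r t =>
      (if r = t then (1:ℚ) else 0) + (if r = j ∧ t ≠ j then -(M i0 t / M i0 j) else 0) with hE₀
    obtain ⟨E', hE', hid'⟩ := ih (colElim M i0 j)
    refine ⟨E₀ * E', ?_, ?_⟩
    · show elimAll (colElim M i0 j) L = _
      rw [hE', colElim_eq_mul, ← Matrix.mul_assoc]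
    · intro p q hp
      have hpj : p ≠ j := hp a
      have hE₀p : ∀ r, E₀ p r = if p = r then 1 else 0 := by
        intro r; simp [hE₀, hpj]
      rw [Matrix.mul_apply]
      calc ∑ r, E₀ p r * E' r q = ∑ r, (if p = r then (1:ℚ) else 0) * E' r q := by
            refine Finset.sum_congr rfl fun r _ => by rw [hE₀p]
        _ = E' p q := by simp
        _ = if p = q then 1 else 0 := hid' p q hp

end Aux

/-- Performing the `k` pivot eliminations at positions `(n+1,1), …, (n+k,k)` of
`M = ((id_n, 0),(A,-b))` in any order (with all pivots nonzero) yields, on the retained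
rows and columns, the block matrix with blocks `(-A₁⁻¹A₂, A₁⁻¹b₁)`, `(id, 0)` and
`(A₄ - A₃A₁⁻¹A₂, A₃A₁⁻¹b₁ - b₂)`; in particular the result is independent of the
order of the pivots. -/
theorem stmt3 (k m s : ℕ)
    (A₁ : Matrix (Fin k) (Fin k) ℤ) (A₂ : Matrix (Fin k) (Fin m) ℤ)
    (A₃ : Matrix (Fin s) (Fin k) ℤ) (A₄ : Matrix (Fin s) (Fin m) ℤ)
    (b₁ : Fin k → ℤ) (b₂ : Fin s → ℤ)
    (hA₁ : A₁.det ≠ 0)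
    (A₁q : Matrix (Fin k) (Fin k) ℚ) (hA₁q : A₁q = A₁.map (Int.cast : ℤ → ℚ))
    (A₂q : Matrix (Fin k) (Fin m) ℚ) (hA₂q : A₂q = A₂.map (Int.cast : ℤ → ℚ))
    (A₃q : Matrix (Fin s) (Fin k) ℚ) (hA₃q : A₃q = A₃.map (Int.cast : ℤ → ℚ))
    (A₄q : Matrix (Fin s) (Fin m) ℚ) (hA₄q : A₄q = A₄.map (Int.cast : ℤ → ℚ))
    (b₁q : Fin k → ℚ) (hb₁q : b₁q = fun i => (b₁ i : ℚ))
    (b₂q : Fin s → ℚ) (hb₂q : b₂q = fun i => (b₂ i : ℚ))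
    (M : Matrix (RowIdx k m s) (ColIdx k m) ℚ)
    (hM : M = bigM A₁q A₂q A₃q A₄q b₁q b₂q)
    (L : List (Fin k)) (hL : L.Perm (List.finRange k))
    (hpiv : ∀ (L₁ L₂ : List (Fin k)) (i : Fin k), L = L₁ ++ i :: L₂ →
      elimAll M L₁ (Sum.inr (Sum.inl i)) (Sum.inl (Sum.inl i)) ≠ 0)
    (N : Matrix (RowIdx k m s) (ColIdx k m) ℚ) (hN : N = elimAll M L) :
    (∀ (i : Fin k) (j : Fin m),
      N (Sum.inl (Sum.inl i)) (Sum.inl (Sum.inr j)) = (-(A₁q⁻¹ * A₂q)) i j) ∧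
    (∀ i : Fin k, N (Sum.inl (Sum.inl i)) (Sum.inr ()) = (A₁q⁻¹ *ᵥ b₁q) i) ∧
    (∀ (i j : Fin m),
      N (Sum.inl (Sum.inr i)) (Sum.inl (Sum.inr j)) = if i = j then 1 else 0) ∧
    (∀ i : Fin m, N (Sum.inl (Sum.inr i)) (Sum.inr ()) = 0) ∧
    (∀ (i : Fin s) (j : Fin m),
      N (Sum.inr (Sum.inr i)) (Sum.inl (Sum.inr j)) = (A₄q - A₃q * A₁q⁻¹ * A₂q) i j) ∧
    (∀ i : Fin s,
      N (Sum.inr (Sum.inr i)) (Sum.inr ()) = (A₃q *ᵥ (A₁q⁻¹ *ᵥ b₁q) - b₂q) i) := by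
    -- invertibility of A₁q
  have hdetq : A₁q.det ≠ 0 := by
    have h1 : A₁q.det = ((A₁.det : ℤ) : ℚ) := by
      rw [hA₁q]
      exact (RingHom.map_det (Int.castRingHom ℚ) A₁).symm
    rw [h1]
    exact_mod_cast hA₁
  have hinv : A₁q⁻¹ * A₁q = 1 := Matrix.nonsing_inv_mul _ (isUnit_iff_ne_zero.mpr hdetq)
  obtain ⟨E, hE, hid⟩ := elimAll_exists_E L M
  have hNE : N = M * E := by rw [hN, hE]
  -- identity rows of E
  have hid2 : ∀ (j : Fin m) (q : ColIdx k m), E (Sum.inl (Sum.inr j)) q =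
      if Sum.inl (Sum.inr j) = q then 1 else 0 := fun j q => hid _ q (by simp)
  have hid3 : ∀ q : ColIdx k m, E (Sum.inr ()) q =
      if (Sum.inr () : ColIdx k m) = q then 1 else 0 := fun q => hid _ q (by simp)
  -- top rows of N are the rows of E
  have htop : ∀ (x : Fin k ⊕ Fin m) (q : ColIdx k m), N (Sum.inl x) q = E (Sum.inl x) q := by
    intro x q
    rw [hNE, hM, Matrix.mul_apply]
    simp [bigM, Fintype.sum_sum_type, ite_mul, one_mul, zero_mul, Finset.sum_ite_eq]
  -- expansion of bottom rows
  have hbot1 : ∀ (i : Fin k) (q : ColIdx k m), N (Sum.inr (Sum.inl i)) q =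
      (∑ j', A₁q i j' * E (Sum.inl (Sum.inl j')) q) +
      (∑ j'', A₂q i j'' * E (Sum.inl (Sum.inr j'')) q) + (-b₁q i) * E (Sum.inr ()) q := by
    intro i q
    rw [hNE, hM, Matrix.mul_apply]
    simp [bigM, Fintype.sum_sum_type]
  have hbot2 : ∀ (i : Fin s) (q : ColIdx k m), N (Sum.inr (Sum.inr i)) q =
      (∑ j', A₃q i j' * E (Sum.inl (Sum.inl j')) q) +
      (∑ j'', A₄q i j'' * E (Sum.inl (Sum.inr j'')) q) + (-b₂q i) * E (Sum.inr ()) q := by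
    intro i q
    rw [hNE, hM, Matrix.mul_apply]
    simp [bigM, Fintype.sum_sum_type]
  -- zero rows
  have hzero : ∀ (i : Fin k) (q : ColIdx k m), q ≠ Sum.inl (Sum.inl i) →
      N (Sum.inr (Sum.inl i)) q = 0 := by
    intro i q hq
    rw [hN]
    exact elimAll_zero_rows L M (hL.symm.nodup (List.nodup_finRange k)) hpiv i
      (hL.mem_iff.mpr (List.mem_finRange i)) q hq
  -- the F block
  set F : Matrix (Fin k) (Fin m) ℚ := Matrix.of fun i j => E (Sum.inl (Sum.inl i)) (Sum.inl (Sum.inr j)) with hF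
  set g : Fin k → ℚ := fun i => E (Sum.inl (Sum.inl i)) (Sum.inr ()) with hg
  have hAF : A₁q * F = -A₂q := by
    ext i j
    have h0 := hzero i (Sum.inl (Sum.inr j)) (by simp)
    rw [hbot1] at h0
    simp [hid2, hid3, mul_ite, Finset.sum_ite_eq'] at h0
    rw [Matrix.mul_apply, Matrix.neg_apply]
    have hsum : ∑ j', A₁q i j' * F j' j
        = ∑ j', A₁q i j' * E (Sum.inl (Sum.inl j')) (Sum.inl (Sum.inr j)) := rfl
    rw [hsum]
    linarith
  have hFval : F = -(A₁q⁻¹ * A₂q) := by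
    calc F = (A₁q⁻¹ * A₁q) * F := by rw [hinv, Matrix.one_mul]
      _ = A₁q⁻¹ * (A₁q * F) := Matrix.mul_assoc _ _ _
      _ = A₁q⁻¹ * (-A₂q) := by rw [hAF]
      _ = -(A₁q⁻¹ * A₂q) := Matrix.mul_neg _ _
  have hAg : A₁q *ᵥ g = b₁q := by
    ext i
    have h0 := hzero i (Sum.inr ()) (by simp)
    rw [hbot1] at h0
    simp [hid2, hid3] at h0
    show ∑ j', A₁q i j' * g j' = b₁q i
    have hsum : ∑ j', A₁q i j' * g j'
        = ∑ j', A₁q i j' * E (Sum.inl (Sum.inl j')) (Sum.inr ()) := rfl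
    rw [hsum]
    linarith
  have hgval : g = A₁q⁻¹ *ᵥ b₁q := by
    rw [← hAg, Matrix.mulVec_mulVec, hinv, Matrix.one_mulVec]
  refine ⟨?_, ?_, ?_, ?_, ?_, ?_⟩
  · intro i j
    rw [htop]
    show F i j = _
    rw [hFval]
  · intro i
    rw [htop]
    show g i = _
    rw [hgval]
  · intro i j
    rw [htop, hid2]
    simp
  · intro i
    rw [htop, hid2]
    simp
  · intro i j
    rw [hbot2]
    simp only [hid2, hid3, mul_ite, mul_one, mul_zero]
    have hsum : ∑ j', A₃q i j' * E (Sum.inl (Sum.inl j')) (Sum.inl (Sum.inr j))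
        = (A₃q * F) i j := (Matrix.mul_apply).symm
    rw [hsum, hFval]
    simp [Matrix.mul_neg, Matrix.sub_apply, Matrix.neg_apply, Matrix.mul_assoc,
      Finset.sum_ite_eq']
    ring
  · intro i
    rw [hbot2]
    simp only [hid2, hid3, mul_ite, mul_one, mul_zero]
    have hsum : ∑ j', A₃q i j' * E (Sum.inl (Sum.inl j')) (Sum.inr ())
        = (A₃q *ᵥ g) i := rfl
    rw [hsum, hgval]
    simp [Pi.sub_apply]
    ring
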